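/- Suppose 0 < R < 2, R ≠ R_n, and x = (C, J_1, …, J_n) ∈ M_n(R) has two adjacent arms stretched out: a_k = b_k and a_{k+1} = b_{k+1} for some k (indices mod n). Then the 2n + 2 vectors in ℝ^{2n+2} consisting of the gradients ∇f_1(x), …, ∇f_{2n}(x) together with the two standard basis vectors corresponding to the coordinates p_k and p_{k+1} (the first coordinates of J_k and J_{k+1}) are linearly independent; equivalently, the (2n+2)×(2n+2) matrix with these rows is invertible, so that (p_k, p_{k+1}) serve as local coordinates on M_n(R) near x. -/

import Mathlib

/-- Euclidean norm of a vector in ℝ². -/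
noncomputable def enorm2 (v : ℝ × ℝ) : ℝ := Real.sqrt (v.1 ^ 2 + v.2 ^ 2)

/-- The k-th fixed endpoint `B_k = (R cos(2kπ/n), R sin(2kπ/n))` (indices from 0). -/
noncomputable def Bpt (n : ℕ) (R : ℝ) (k : Fin n) : ℝ × ℝ :=
  (R * Real.cos (2 * (k.val : ℝ) * Real.pi / (n : ℝ)),
   R * Real.sin (2 * (k.val : ℝ) * Real.pi / (n : ℝ)))

/-- The configuration space `M_n(R)` of spiders with `n` arms of radius `R`,
as a subset of `(ℝ²)^{n+1} ≅ ℝ^{2n+2}`: a pair `(C, J)` with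
`|C − J_k| = 1` and `|J_k − B_k| = 1` for all `k`. -/
noncomputable def MSpace (n : ℕ) (R : ℝ) : Set ((ℝ × ℝ) × (Fin n → ℝ × ℝ)) :=
  {x | ∀ k : Fin n, enorm2 (x.1 - x.2 k) = 1 ∧ enorm2 (x.2 k - Bpt n R k) = 1}

/-- `d_n`, the maximum distance between `n`-th roots of unity. -/
noncomputable def dmax (n : ℕ) : ℝ :=
  if Even n then 2
  else Real.sqrt (2 - 2 * Real.cos (2 * ((n / 2 : ℕ) : ℝ) * Real.pi / (n : ℝ)))

/-- The critical radius `R_n = 2 / d_n`. -/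
noncomputable def Rcrit (n : ℕ) : ℝ := 2 / dmax n

/-- The gradient of `f_{2k−1}(x) = |C − J_k|² − 1` at `x`: the vector with `2 a_k`
in the `C` slot and `−2 a_k` in the `J_k` slot (and `0` elsewhere), where
`a_k = C − J_k`. -/
noncomputable def grad1 (n : ℕ) (x : (ℝ × ℝ) × (Fin n → ℝ × ℝ)) (k : Fin n) :
    (ℝ × ℝ) × (Fin n → ℝ × ℝ) :=
  ((2 : ℝ) • (x.1 - x.2 k),
   fun j => if j = k then -((2 : ℝ) • (x.1 - x.2 k)) else 0)

/-- The gradient of `f_{2k}(x) = |J_k − B_k|² − 1` at `x`: the vector with `2 b_k`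
in the `J_k` slot (and `0` elsewhere), where `b_k = J_k − B_k`. -/
noncomputable def grad2 (n : ℕ) (R : ℝ) (x : (ℝ × ℝ) × (Fin n → ℝ × ℝ)) (k : Fin n) :
    (ℝ × ℝ) × (Fin n → ℝ × ℝ) :=
  ((0 : ℝ × ℝ),
   fun j => if j = k then (2 : ℝ) • (x.2 k - Bpt n R k) else 0)

/-- The standard basis vector of `ℝ^{2n+2}` corresponding to the coordinate `p_k`
(the first coordinate of `J_k`). -/
noncomputable def epk (n : ℕ) (k : Fin n) : (ℝ × ℝ) × (Fin n → ℝ × ℝ) :=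
  ((0 : ℝ × ℝ), fun j => if j = k then ((1 : ℝ), (0 : ℝ)) else 0)

open Real

/-! ### Auxiliary lemmas -/

lemma indep_of_units {a b : ℝ × ℝ} (ha : a.1^2 + a.2^2 = 1) (hb : b.1^2 + b.2^2 = 1)
    (hne : a ≠ b) (hne' : a ≠ -b) {α β : ℝ} (h : α • a = β • b) : α = 0 ∧ β = 0 := by
  have h1 : α * a.1 = β * b.1 := congrArg Prod.fst h
  have h2 : α * a.2 = β * b.2 := congrArg Prod.snd h
  have hsq : (α - β) * (α + β) = 0 := by
    linear_combination (α * a.1 + β * b.1) * h1 + (α * a.2 + β * b.2) * h2 - α^2 * ha + β^2 * hb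
  have hb0 : b.1 ≠ 0 ∨ b.2 ≠ 0 := by
    by_contra hc; push_neg at hc; rw [hc.1, hc.2] at hb; norm_num at hb
  have hα : α = 0 := by
    rcases mul_eq_zero.1 hsq with hd | hd
    · by_contra hα0
      have hβ : β = α := by linarith
      rw [hβ] at h1 h2
      exact hne (Prod.ext (mul_left_cancel₀ hα0 h1) (mul_left_cancel₀ hα0 h2))
    · by_contra hα0
      have hβ : β = -α := by linarith
      rw [hβ] at h1 h2
      refine hne' (Prod.ext ?_ ?_) <;> simp only [Prod.fst_neg, Prod.snd_neg]
      · exact mul_left_cancel₀ hα0 (by linarith : α * a.1 = α * (-b.1))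
      · exact mul_left_cancel₀ hα0 (by linarith : α * a.2 = α * (-b.2))
  refine ⟨hα, ?_⟩
  rw [hα, zero_mul] at h1 h2
  rcases hb0 with hb1 | hb1
  · exact (mul_eq_zero.1 h1.symm).resolve_right hb1
  · exact (mul_eq_zero.1 h2.symm).resolve_right hb1

lemma three_on_two_circles {C P Q S : ℝ × ℝ} (hC : C ≠ 0)
    (hPQ : P.1^2 + P.2^2 = Q.1^2 + Q.2^2) (hPS : P.1^2 + P.2^2 = S.1^2 + S.2^2)
    (hPQ2 : (P.1 - C.1)^2 + (P.2 - C.2)^2 = (Q.1 - C.1)^2 + (Q.2 - C.2)^2)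
    (hPS2 : (P.1 - C.1)^2 + (P.2 - C.2)^2 = (S.1 - C.1)^2 + (S.2 - C.2)^2)
    (hpq : P ≠ Q) (hps : P ≠ S) : Q = S := by
  have hc2 : C.1^2 + C.2^2 ≠ 0 := by
    intro hc
    apply hC
    have h1 : C.1^2 = 0 := by linarith [sq_nonneg C.1, sq_nonneg C.2]
    have h2 : C.2^2 = 0 := by linarith [sq_nonneg C.1, sq_nonneg C.2]
    exact Prod.ext (by simpa using (pow_eq_zero_iff two_ne_zero).mp h1)
      (by simpa using (pow_eq_zero_iff two_ne_zero).mp h2)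
  have hu : (P.1 - Q.1) * C.1 + (P.2 - Q.2) * C.2 = 0 := by linear_combination (hPQ - hPQ2) / 2
  have hw : (P.1 - S.1) * C.1 + (P.2 - S.2) * C.2 = 0 := by linear_combination (hPS - hPS2) / 2
  set s : ℝ := (-(P.1 - Q.1) * C.2 + (P.2 - Q.2) * C.1) / (C.1^2 + C.2^2) with hs
  set t : ℝ := (-(P.1 - S.1) * C.2 + (P.2 - S.2) * C.1) / (C.1^2 + C.2^2) with ht
  have hu1 : P.1 - Q.1 = -s * C.2 := by
    rw [hs, neg_mul, div_mul_eq_mul_div, ← neg_div, eq_div_iff hc2]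
    linear_combination C.1 * hu
  have hu2 : P.2 - Q.2 = s * C.1 := by
    rw [hs, div_mul_eq_mul_div, eq_div_iff hc2]
    linear_combination C.2 * hu
  have hw1 : P.1 - S.1 = -t * C.2 := by
    rw [ht, neg_mul, div_mul_eq_mul_div, ← neg_div, eq_div_iff hc2]
    linear_combination C.1 * hw
  have hw2 : P.2 - S.2 = t * C.1 := by
    rw [ht, div_mul_eq_mul_div, eq_div_iff hc2]
    linear_combination C.2 * hw
  have hs0 : s ≠ 0 := by
    intro h0; rw [h0] at hu1 hu2
    exact hpq (Prod.ext (by linarith [hu1] : P.1 = Q.1) (by linarith [hu2] : P.2 = Q.2))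
  have ht0 : t ≠ 0 := by
    intro h0; rw [h0] at hw1 hw2
    exact hps (Prod.ext (by linarith [hw1] : P.1 = S.1) (by linarith [hw2] : P.2 = S.2))
  have e1 : s * (2 * (-P.1 * C.2 + P.2 * C.1) - s * (C.1^2 + C.2^2)) = 0 := by
    linear_combination hPQ - (P.1 + Q.1) * hu1 - (P.2 + Q.2) * hu2
      + (-s*C.2) * hu1 + (s*C.1) * hu2
  have e2 : t * (2 * (-P.1 * C.2 + P.2 * C.1) - t * (C.1^2 + C.2^2)) = 0 := by
    linear_combination hPS - (P.1 + S.1) * hw1 - (P.2 + S.2) * hw2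
      + (-t*C.2) * hw1 + (t*C.1) * hw2
  have f1 : 2 * (-P.1 * C.2 + P.2 * C.1) = s * (C.1^2 + C.2^2) := by
    have := (mul_eq_zero.1 e1).resolve_left hs0; linarith
  have f2 : 2 * (-P.1 * C.2 + P.2 * C.1) = t * (C.1^2 + C.2^2) := by
    have := (mul_eq_zero.1 e2).resolve_left ht0; linarith
  have hst : s = t := by
    have : (s - t) * (C.1^2 + C.2^2) = 0 := by linear_combination f2 - f1
    have := (mul_eq_zero.1 this).resolve_right hc2; linarith
  rw [hst] at hu1 hu2
  exact Prod.ext (by linarith [hu1, hw1]) (by linarith [hu2, hw2])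

lemma sin_sq_bound {n : ℕ} (hn : 2 ≤ n) (t : ℕ)
    (h0 : 0 < Real.sin ((t : ℝ) * π / n) ^ 2)
    (h1 : Real.sin ((t : ℝ) * π / n) ^ 2 < Real.sin (π / n) ^ 2) : False := by
  have hnR : (0:ℝ) < n := by positivity
  have hpi := Real.pi_pos
  set r : ℕ := t % n with hr
  set q : ℕ := t / n with hq
  have hrn : r < n := Nat.mod_lt _ (by omega)
  have hqt : (t : ℝ) = (n:ℝ) * (q:ℝ) + (r:ℝ) := by exact_mod_cast (Nat.div_add_mod t n).symm
  have ht : (t : ℝ) * π / n = (r : ℝ) * π / n + ((q : ℕ) : ℤ) * π := by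
    field_simp
    linear_combination hqt
  have hsq : Real.sin ((t : ℝ) * π / n) ^ 2 = Real.sin ((r : ℝ) * π / n) ^ 2 := by
    rw [ht, Real.sin_add_int_mul_pi, mul_pow, zpow_natCast, ← pow_mul, mul_comm q 2, pow_mul]
    norm_num
  rw [hsq] at h0 h1
  rcases Nat.eq_zero_or_pos r with h | h
  · rw [h] at h0; norm_num at h0
  · have hr1 : (1:ℝ) ≤ (r:ℝ) := by exact_mod_cast h
    have hrn1 : (r:ℝ) + 1 ≤ (n:ℝ) := by exact_mod_cast (by omega : r + 1 ≤ n)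
    have hp2 : 0 < π / (n:ℝ) := by positivity
    have hkey : Real.sin (π / n) ≤ Real.sin ((r:ℝ) * π / n) := by
      rcases le_or_gt ((r:ℝ) * π / n) (π / 2) with hc | hc
      · apply Real.sin_le_sin_of_le_of_le_pi_div_two (by linarith) hc
        rw [div_le_div_iff₀ hnR hnR]
        nlinarith [mul_nonneg (mul_nonneg (by linarith : (0:ℝ) ≤ (r:ℝ) - 1) hpi.le) hnR.le]
      · have hrw : Real.sin ((r:ℝ) * π / n) = Real.sin (π - (r:ℝ) * π / n) :=
          (Real.sin_pi_sub _).symm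
        rw [hrw]
        have h2 : ((r:ℝ) + 1) * π / n ≤ π := by
          rw [div_le_iff₀ hnR]; nlinarith
        have h3 : (r:ℝ) * π / n + π / n = ((r:ℝ) + 1) * π / n := by ring
        apply Real.sin_le_sin_of_le_of_le_pi_div_two (by linarith) (by linarith)
        linarith
    have hpos : 0 ≤ Real.sin (π / n) := by
      apply Real.sin_nonneg_of_nonneg_of_le_pi (le_of_lt hp2)
      rw [div_le_iff₀ hnR]; nlinarith
    have := pow_le_pow_left₀ hpos hkey 2
    linarith

lemma theta_inj {n : ℕ} (hn : 0 < n) {j k : Fin n}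
    (hc : Real.cos (2 * (j.val : ℝ) * π / n) = Real.cos (2 * (k.val : ℝ) * π / n))
    (hs : Real.sin (2 * (j.val : ℝ) * π / n) = Real.sin (2 * (k.val : ℝ) * π / n)) :
    j = k := by
  have hnR : (0:ℝ) < n := by exact_mod_cast hn
  have hpi := Real.pi_pos
  set x : ℝ := 2 * (j.val : ℝ) * π / n with hx
  set y : ℝ := 2 * (k.val : ℝ) * π / n with hy
  have hjn : (j.val : ℝ) < n := by exact_mod_cast j.2
  have hkn : (k.val : ℝ) < n := by exact_mod_cast k.2
  have hj0 : (0:ℝ) ≤ (j.val : ℝ) := by positivity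
  have hk0 : (0:ℝ) ≤ (k.val : ℝ) := by positivity
  have hx0 : 0 ≤ x := by positivity
  have hy0 : 0 ≤ y := by positivity
  have hx2 : x < 2 * π := by rw [hx, div_lt_iff₀ hnR]; nlinarith
  have hy2 : y < 2 * π := by rw [hy, div_lt_iff₀ hnR]; nlinarith
  have hxy : x = y → j = k := by
    intro h
    have h' : (j.val : ℝ) = (k.val : ℝ) := by
      rw [hx, hy] at h
      field_simp at h
      linarith
    exact Fin.ext (by exact_mod_cast h')
  rcases Real.cos_eq_cos_iff.1 hc with ⟨m, hm | hm⟩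
  · have hb1 : (m:ℝ) < 1 := by nlinarith
    have hb2 : (-1:ℝ) < (m:ℝ) := by nlinarith
    have hm0 : m = 0 := by
      have h1 : m < 1 := by exact_mod_cast hb1
      have h2 : -1 < m := by exact_mod_cast hb2
      omega
    apply hxy
    rw [hm0] at hm; push_cast at hm; linarith
  · have hb1 : (m:ℝ) < 2 := by nlinarith
    have hb2 : (-1:ℝ) < (m:ℝ) := by nlinarith
    have hm01 : m = 0 ∨ m = 1 := by
      have h1 : m < 2 := by exact_mod_cast hb1
      have h2 : -1 < m := by exact_mod_cast hb2
      omega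
    rcases hm01 with hm0 | hm1
    · rw [hm0] at hm; push_cast at hm
      exact hxy (by linarith)
    · rw [hm1] at hm; push_cast at hm
      have hsy : Real.sin y = -Real.sin x := by
        rw [hm]
        have : (2:ℝ) * 1 * π - x = 2 * π - x := by ring
        rw [this, Real.sin_sub]
        simp [Real.sin_two_pi, Real.cos_two_pi]
      have hsx : Real.sin x = 0 := by rw [hsy] at hs; linarith
      rcases Real.sin_eq_zero_iff.1 hsx with ⟨L, hL⟩
      have hL0 : (0:ℝ) ≤ (L:ℝ) * π := by rw [hL]; exact hx0
      have hL2 : (L:ℝ) * π < 2 * π := by rw [hL]; exact hx2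
      have hLb : L = 0 ∨ L = 1 := by
        have h1 : (0:ℝ) ≤ (L:ℝ) := by nlinarith
        have h2 : (L:ℝ) < 2 := by nlinarith
        have h1' : 0 ≤ L := by exact_mod_cast h1
        have h2' : L < 2 := by exact_mod_cast h2
        omega
      rcases hLb with hL1 | hL1
      · rw [hL1] at hL; push_cast at hL
        rw [← hL] at hm
        exfalso; rw [hm] at hy2; linarith
      · rw [hL1] at hL; push_cast at hL
        apply hxy
        rw [← hL] at hm ⊢
        linarith

lemma Bpt_inj {n : ℕ} (hn : 0 < n) {R : ℝ} (hR0 : 0 < R) {j k : Fin n}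
    (h : Bpt n R j = Bpt n R k) : j = k := by
  have h1 := congrArg Prod.fst h
  have h2 := congrArg Prod.snd h
  simp only [Bpt] at h1 h2
  exact theta_inj hn (mul_left_cancel₀ (ne_of_gt hR0) h1)
    (mul_left_cancel₀ (ne_of_gt hR0) h2)

lemma Bpt_succ {n : ℕ} (hn : 0 < n) (R : ℝ) {k k' : Fin n} (hk' : k'.val = (k.val + 1) % n) :
    Bpt n R k' = (R * Real.cos (2 * ((k.val : ℝ) + 1) * π / n),
                  R * Real.sin (2 * ((k.val : ℝ) + 1) * π / n)) := by
  have hnR : (0:ℝ) < n := by exact_mod_cast hn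
  set q : ℕ := (k.val + 1) / n with hq0
  have hq : (k.val + 1 : ℕ) = n * q + k'.val := by
    rw [hk', hq0]; exact (Nat.div_add_mod _ _).symm
  have hqR : ((k.val : ℝ) + 1) = n * (q : ℝ) + (k'.val : ℝ) := by exact_mod_cast hq
  have hcast : (((q : ℕ) : ℤ) : ℝ) = (q : ℝ) := by push_cast; ring
  have key : 2 * ((k.val : ℝ) + 1) * π / n
      = 2 * (k'.val : ℝ) * π / n + (((q : ℕ) : ℤ) : ℝ) * (2 * π) := by
    rw [hcast]
    field_simp
    linear_combination hqR
  rw [Bpt, key, Real.cos_add_int_mul_two_pi, Real.sin_add_int_mul_two_pi]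

set_option maxHeartbeats 1000000 in
lemma folded {n : ℕ} (hn : 2 ≤ n) {R : ℝ} (hR0 : 0 < R) {k k' j : Fin n}
    (hk' : k'.val = (k.val + 1) % n)
    (h4 : ((Bpt n R j).1 - (Bpt n R k).1)^2 + ((Bpt n R j).2 - (Bpt n R k).2)^2 = 4)
    (h4' : ((Bpt n R j).1 - (Bpt n R k').1)^2 + ((Bpt n R j).2 - (Bpt n R k').2)^2 = 4) :
    R = Rcrit n := by
  have hnR : (0:ℝ) < n := by positivity
  have hn2R : (2:ℝ) ≤ n := by exact_mod_cast hn
  have hpi := Real.pi_pos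
  rw [Bpt_succ (by omega) R hk'] at h4'
  set A : ℝ := 2 * (j.val : ℝ) * π / n with hA
  set K : ℝ := 2 * (k.val : ℝ) * π / n with hK
  set K' : ℝ := 2 * ((k.val : ℝ) + 1) * π / n with hK'
  simp only [Bpt] at h4 h4'
  have hR2 : (R:ℝ)^2 ≠ 0 := by positivity
  have e1 : R^2 * (2 - 2 * Real.cos (A - K)) = 4 := by
    rw [Real.cos_sub]
    linear_combination h4 - R^2 * (Real.sin_sq_add_cos_sq A) - R^2 * (Real.sin_sq_add_cos_sq K)
  have e2 : R^2 * (2 - 2 * Real.cos (A - K')) = 4 := by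
    rw [Real.cos_sub]
    linear_combination h4' - R^2 * (Real.sin_sq_add_cos_sq A) - R^2 * (Real.sin_sq_add_cos_sq K')
  have hcc : Real.cos (A - K) = Real.cos (A - K') :=
    mul_left_cancel₀ hR2 (by linear_combination (e1 - e2) / (-2))
  have hKK' : K' = K + 2 * π / n := by rw [hK, hK']; ring
  rcases Real.cos_eq_cos_iff.1 hcc with ⟨m, hm | hm⟩
  · exfalso
    rw [hKK'] at hm
    have hd2 : (-1 : ℝ) = (m:ℝ) * n := by
      have hstep : -(2 * π / n) = (m:ℝ) * (2 * π) := by linarith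
      field_simp at hstep
      apply mul_right_cancel₀ (by positivity : (2*π:ℝ) ≠ 0)
      linear_combination (2 * π) * hstep
    have hint : (-1 : ℤ) = m * n := by exact_mod_cast hd2
    have hdvd : (n:ℤ) ∣ 1 := ⟨-m, by linarith⟩
    have := Int.le_of_dvd one_pos hdvd
    omega
  · rw [hKK'] at hm
    have h2A : 2*A - 2*K - 2*π/n = (m:ℝ) * (2*π) := by linarith
    have hint : 2 * ((j.val : ℤ) - (k.val : ℤ)) - 1 = m * n := by
      have hreal : (2 * ((j.val : ℝ) - (k.val : ℝ)) - 1) * (2 * π) = ((m:ℝ) * n) * (2 * π) := by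
        rw [hA, hK] at h2A
        field_simp at h2A
        linear_combination (2 * π) * h2A
      exact_mod_cast mul_right_cancel₀ (by positivity : (2*π:ℝ) ≠ 0) hreal
    have hmodd : Odd m := by
      rcases Int.even_or_odd m with ⟨c, hc⟩ | h
      · exfalso
        obtain ⟨w, hw⟩ : ∃ w : ℤ, 2 * ((j.val : ℤ) - (k.val : ℤ)) - 1 = 2 * w :=
          ⟨c * n, by rw [hint, hc]; ring⟩
        omega
      · exact h
    have hnodd : Odd n := by
      rcases Nat.even_or_odd n with ⟨e, he⟩ | h
      · exfalso
        obtain ⟨w, hw⟩ : ∃ w : ℤ, 2 * ((j.val : ℤ) - (k.val : ℤ)) - 1 = 2 * w :=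
          ⟨m * e, by rw [hint, (by exact_mod_cast he : (n:ℤ) = e + e)]; ring⟩
        omega
      · exact h
    obtain ⟨c, hc⟩ := hmodd
    have hmr : (m:ℝ) = 2*(c:ℝ) + 1 := by exact_mod_cast hc
    have hAK : A - K = π/n + π + (c:ℝ)*(2*π) := by
      linear_combination h2A / 2 + π * hmr
    have hcosAK : Real.cos (A - K) = -Real.cos (π / n) := by
      rw [hAK, Real.cos_add_int_mul_two_pi, Real.cos_add_pi]
    rw [hcosAK] at e1
    obtain ⟨m₀, hm₀⟩ := hnodd
    have hnoteven : ¬ Even n := by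
      rw [Nat.even_iff]; omega
    have hhalf : (n / 2 : ℕ) = m₀ := by omega
    have h2m : 2 * (m₀ : ℝ) + 1 = (n : ℝ) := by exact_mod_cast hm₀.symm
    have hangle : 2 * ((m₀ : ℕ) : ℝ) * π / n = π - π / n := by
      field_simp
      linear_combination h2m
    have hcoshalf : Real.cos (2 * ((m₀ : ℕ) : ℝ) * π / n) = -Real.cos (π / n) := by
      rw [hangle, Real.cos_pi_sub]
    have hdm : dmax n = Real.sqrt (2 + 2 * Real.cos (π / n)) := by
      rw [dmax, if_neg hnoteven, hhalf, hcoshalf]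
      ring_nf
    have hcospos : 0 ≤ Real.cos (π / n) := by
      apply Real.cos_nonneg_of_mem_Icc
      constructor
      · have : 0 < π / (n:ℝ) := by positivity
        linarith
      · rw [div_le_div_iff₀ hnR (by norm_num : (0:ℝ) < 2)]
        nlinarith
    have hD : 0 < 2 + 2 * Real.cos (π / n) := by linarith
    have hss : Real.sqrt (2 + 2 * Real.cos (π / n)) ^ 2 = 2 + 2 * Real.cos (π / n) :=
      Real.sq_sqrt hD.le
    have hspos : 0 < Real.sqrt (2 + 2 * Real.cos (π / n)) := Real.sqrt_pos.2 hD
    have hfac : (R * Real.sqrt (2 + 2 * Real.cos (π / n)) - 2)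
        * (R * Real.sqrt (2 + 2 * Real.cos (π / n)) + 2) = 0 := by
      linear_combination e1 + R^2 * hss
    have heq2 : R * Real.sqrt (2 + 2 * Real.cos (π / n)) = 2 := by
      rcases mul_eq_zero.1 hfac with h | h
      · linarith
      · nlinarith [mul_pos hR0 hspos]
    rw [Rcrit, hdm, eq_div_iff (ne_of_gt hspos)]
    exact heq2

lemma not_horizontal {n : ℕ} (hn : 2 ≤ n) {R : ℝ} (hR0 : 0 < R) (hR2 : R < 2)
    {k k' : Fin n} (hk' : k'.val = (k.val + 1) % n)
    (hveq : ((Bpt n R k').1 - (Bpt n R k).1)^2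
      = (((Bpt n R k').1 - (Bpt n R k).1)^2 + ((Bpt n R k').2 - (Bpt n R k).2)^2)^2 / 16) :
    False := by
  have hnR : (0:ℝ) < n := by positivity
  have hn2R : (2:ℝ) ≤ n := by exact_mod_cast hn
  have hpi := Real.pi_pos
  rw [Bpt_succ (by omega) R hk'] at hveq
  set φ : ℝ := (2 * (k.val : ℝ) + 1) * π / n with hφ
  set s : ℝ := Real.sin (π / n) with hsdef
  have hs : 0 < s := by
    rw [hsdef]
    apply Real.sin_pos_of_pos_of_lt_pi (by positivity)
    rw [div_lt_iff₀ hnR]; nlinarith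
  have e1 : (2 * ((k.val : ℝ) + 1) * π / n + 2 * (k.val : ℝ) * π / n) / 2 = φ := by
    rw [hφ]; ring
  have e2 : (2 * ((k.val : ℝ) + 1) * π / n - 2 * (k.val : ℝ) * π / n) / 2 = π / n := by ring
  have hv1 : (R * Real.cos (2 * ((k.val : ℝ) + 1) * π / n),
      R * Real.sin (2 * ((k.val : ℝ) + 1) * π / n)).1 - (Bpt n R k).1
      = R * (-2 * Real.sin φ * s) := by
    show R * Real.cos (2 * ((k.val : ℝ) + 1) * π / n)
      - R * Real.cos (2 * (k.val : ℝ) * π / n) = _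
    rw [show R * Real.cos (2 * ((k.val : ℝ) + 1) * π / n)
      - R * Real.cos (2 * (k.val : ℝ) * π / n)
      = R * (Real.cos (2 * ((k.val : ℝ) + 1) * π / n)
        - Real.cos (2 * (k.val : ℝ) * π / n)) from by ring,
      Real.cos_sub_cos, e1, e2, hsdef]
  have hv2 : (R * Real.cos (2 * ((k.val : ℝ) + 1) * π / n),
      R * Real.sin (2 * ((k.val : ℝ) + 1) * π / n)).2 - (Bpt n R k).2
      = R * (2 * s * Real.cos φ) := by
    show R * Real.sin (2 * ((k.val : ℝ) + 1) * π / n)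
      - R * Real.sin (2 * (k.val : ℝ) * π / n) = _
    rw [show R * Real.sin (2 * ((k.val : ℝ) + 1) * π / n)
      - R * Real.sin (2 * (k.val : ℝ) * π / n)
      = R * (Real.sin (2 * ((k.val : ℝ) + 1) * π / n)
        - Real.sin (2 * (k.val : ℝ) * π / n)) from by ring,
      Real.sin_sub_sin, e1, e2, hsdef]
  rw [hv1, hv2] at hveq
  have hkey : Real.sin φ ^ 2 = R^2 * s^2 / 4 := by
    have h4 : (4 * R^2 * s^2) * (Real.sin φ ^ 2) = (4 * R^2 * s^2) * (R^2 * s^2 / 4) := by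
      linear_combination hveq
        + R^4 * s^4 * (Real.sin φ ^ 2 + Real.cos φ ^ 2 + 1) * (Real.sin_sq_add_cos_sq φ)
    exact mul_left_cancel₀ (by positivity : (4 * R^2 * s^2 : ℝ) ≠ 0) h4
  have h0 : 0 < Real.sin φ ^ 2 := by rw [hkey]; positivity
  have h1 : Real.sin φ ^ 2 < s ^ 2 := by
    rw [hkey]
    have h4R : R^2 < 4 := by nlinarith
    nlinarith [mul_pos (mul_pos hs hs) (sub_pos.2 h4R), mul_pos hs hs]
  have hφt : φ = ((2 * k.val + 1 : ℕ) : ℝ) * π / n := by rw [hφ]; push_cast; ring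
  rw [hφt] at h0 h1
  exact sin_sq_bound hn _ h0 h1

lemma horiz_identity (a1 a2 b1 b2 v1 v2 : ℝ) (ha : a1^2 + a2^2 = 1) (hb : b1^2 + b2^2 = 1)
    (h0 : a2 = 0) (hv1 : v1 = 2*a1 - 2*b1) (hv2 : v2 = 2*a2 - 2*b2) :
    v1^2 = (v1^2 + v2^2)^2 / 16 := by
  subst hv1 hv2 h0
  have ha1 : a1^2 = 1 := by linarith
  have hQ : (2*a1 - 2*b1)^2 + (2*0 - 2*b2)^2 = 8 * (1 - a1*b1) := by
    linear_combination 4 * hb + 4 * ha1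
  have hP : (2*a1 - 2*b1)^2 = 4 * (1 - a1*b1)^2 := by
    linear_combination (4 - 4*b1^2) * ha1
  rw [hQ, hP]
  ring

/-- Suppose `0 < R < 2`, `R ≠ R_n`, and `x ∈ M_n(R)` has two adjacent arms
stretched out (`a_k = b_k` and `a_{k+1} = b_{k+1}`). Then the `2n+2` vectors
`∇f_1(x), …, ∇f_{2n}(x)` together with the standard basis vectors for the
coordinates `p_k`, `p_{k+1}` are linearly independent (so `(p_k, p_{k+1})` serve
as local coordinates on `M_n(R)` near `x`). -/
theorem stmt13 (n : ℕ) (hn : 2 ≤ n) (R : ℝ) (hR0 : 0 < R) (hR2 : R < 2)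
    (hRne : R ≠ Rcrit n)
    (x : (ℝ × ℝ) × (Fin n → ℝ × ℝ)) (hx : x ∈ MSpace n R)
    (k k' : Fin n) (hk' : (k' : ℕ) = ((k : ℕ) + 1) % n)
    (h1 : x.1 - x.2 k = x.2 k - Bpt n R k)
    (h2 : x.1 - x.2 k' = x.2 k' - Bpt n R k') :
    LinearIndependent ℝ
      (Sum.elim (Sum.elim (grad1 n x) (grad2 n R x))
        (fun t : Fin 2 => if t = 0 then epk n k else epk n k') :
        (Fin n ⊕ Fin n) ⊕ Fin 2 → (ℝ × ℝ) × (Fin n → ℝ × ℝ)) := by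
  classical
  have hn0 : 0 < n := by omega
  -- unit vectors
  have hua : ∀ j : Fin n, (x.1 - x.2 j).1^2 + (x.1 - x.2 j).2^2 = 1 := by
    intro j
    have h := (hx j).1
    rw [enorm2] at h
    exact Real.sqrt_eq_one.mp h
  have hub : ∀ j : Fin n, (x.2 j - Bpt n R j).1^2 + (x.2 j - Bpt n R j).2^2 = 1 := by
    intro j
    have h := (hx j).2
    rw [enorm2] at h
    exact Real.sqrt_eq_one.mp h
  have hBnorm : ∀ l : Fin n, (Bpt n R l).1^2 + (Bpt n R l).2^2 = R^2 := by
    intro l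
    rw [Bpt]
    linear_combination R^2 * (Real.sin_sq_add_cos_sq (2 * (l.val : ℝ) * Real.pi / n))
  have hkk'v : (k : ℕ) ≠ (k' : ℕ) := by
    rw [hk']
    rcases Nat.lt_or_ge ((k:ℕ)+1) n with h | h
    · rw [Nat.mod_eq_of_lt h]; omega
    · have hkn := k.2
      have he : (k:ℕ) + 1 = n := by omega
      rw [he, Nat.mod_self]; omega
  have hkk' : k ≠ k' := fun h => hkk'v (congrArg Fin.val h)
  have hCBk : x.1 - Bpt n R k = (2:ℝ) • (x.1 - x.2 k) := by
    have h : x.1 - Bpt n R k = (x.1 - x.2 k) + (x.2 k - Bpt n R k) := by abel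
    rw [h, ← h1, two_smul]
  have hCBk' : x.1 - Bpt n R k' = (2:ℝ) • (x.1 - x.2 k') := by
    have h : x.1 - Bpt n R k' = (x.1 - x.2 k') + (x.2 k' - Bpt n R k') := by abel
    rw [h, ← h2, two_smul]
  -- component forms
  have hCBkc1 : x.1.1 - (Bpt n R k).1 = 2 * (x.1 - x.2 k).1 := by
    have := congrArg Prod.fst hCBk; simpa using this
  have hCBkc2 : x.1.2 - (Bpt n R k).2 = 2 * (x.1 - x.2 k).2 := by
    have := congrArg Prod.snd hCBk; simpa using this
  have hCBk'c1 : x.1.1 - (Bpt n R k').1 = 2 * (x.1 - x.2 k').1 := by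
    have := congrArg Prod.fst hCBk'; simpa using this
  have hCBk'c2 : x.1.2 - (Bpt n R k').2 = 2 * (x.1 - x.2 k').2 := by
    have := congrArg Prod.snd hCBk'; simpa using this
  have hCB4 : ∀ l : Fin n, x.1 - Bpt n R l = (2:ℝ) • (x.1 - x.2 l) →
      (x.1.1 - (Bpt n R l).1)^2 + (x.1.2 - (Bpt n R l).2)^2 = 4 := by
    intro l hl
    have c1 : x.1.1 - (Bpt n R l).1 = 2 * (x.1 - x.2 l).1 := by
      have := congrArg Prod.fst hl; simpa using this
    have c2 : x.1.2 - (Bpt n R l).2 = 2 * (x.1 - x.2 l).2 := by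
      have := congrArg Prod.snd hl; simpa using this
    rw [c1, c2]
    linear_combination 4 * (hua l)
  have hC0 : x.1 ≠ 0 := by
    intro h0
    have h4 := hCB4 k hCBk
    rw [h0] at h4
    simp only [Prod.fst_zero, Prod.snd_zero] at h4
    nlinarith [hBnorm k, hR0, hR2]
  rw [Fintype.linearIndependent_iff]
  intro g hg
  -- extract component equations
  have hfst : ∑ j : Fin n, g (Sum.inl (Sum.inl j)) • ((2:ℝ) • (x.1 - x.2 j)) = (0 : ℝ × ℝ) := by
    have h := congrArg Prod.fst hg
    simpa [Fintype.sum_sum_type, Prod.fst_sum, grad1, grad2, epk, Fin.sum_univ_two,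
      Prod.smul_fst, apply_ite] using h
  have hG : ∀ j : Fin n,
      -(g (Sum.inl (Sum.inl j)) • (2:ℝ) • (x.1 - x.2 j))
      + g (Sum.inl (Sum.inr j)) • (2:ℝ) • (x.2 j - Bpt n R j)
      + ((if j = k then ((g (Sum.inr 0) : ℝ), (0:ℝ)) else 0)
        + if j = k' then ((g (Sum.inr 1) : ℝ), (0:ℝ)) else 0) = 0 := by
    intro j
    have h := congrArg (fun z : (ℝ × ℝ) × (Fin n → ℝ × ℝ) => z.2 j) hg
    simp only [Fintype.sum_sum_type, Fin.sum_univ_two, Prod.snd_add, Finset.sum_apply,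
      Prod.snd_sum, Prod.smul_snd, Pi.add_apply, Pi.smul_apply, Sum.elim_inl, Sum.elim_inr,
      grad1, grad2, epk, smul_ite, smul_zero, Finset.sum_ite_eq, Finset.mem_univ, if_true,
      Prod.snd_zero, Pi.zero_apply] at h
    simpa using h
  -- Step A : arms other than k, k'
  have hA : ∀ j : Fin n, j ≠ k → j ≠ k' →
      g (Sum.inl (Sum.inl j)) = 0 ∧ g (Sum.inl (Sum.inr j)) = 0 := by
    intro j hjk hjk'
    have h := hG j
    rw [if_neg hjk, if_neg hjk'] at h
    have c1 : -(g (Sum.inl (Sum.inl j)) * (2 * (x.1 - x.2 j).1))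
        + g (Sum.inl (Sum.inr j)) * (2 * (x.2 j - Bpt n R j).1) = 0 := by
      have := congrArg Prod.fst h; simpa using this
    have c2 : -(g (Sum.inl (Sum.inl j)) * (2 * (x.1 - x.2 j).2))
        + g (Sum.inl (Sum.inr j)) * (2 * (x.2 j - Bpt n R j).2) = 0 := by
      have := congrArg Prod.snd h; simpa using this
    have hne : x.1 - x.2 j ≠ x.2 j - Bpt n R j := by
      intro heq
      have hCBj : x.1 - Bpt n R j = (2:ℝ) • (x.1 - x.2 j) := by
        have hh : x.1 - Bpt n R j = (x.1 - x.2 j) + (x.2 j - Bpt n R j) := by abel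
        rw [hh, ← heq, two_smul]
      have h4j := hCB4 j hCBj
      have h4k := hCB4 k hCBk
      have h4k' := hCB4 k' hCBk'
      have hQS := three_on_two_circles (C := x.1) (P := Bpt n R j) (Q := Bpt n R k)
        (S := Bpt n R k') hC0
        (by linarith [hBnorm j, hBnorm k]) (by linarith [hBnorm j, hBnorm k'])
        (by linear_combination h4j - h4k) (by linear_combination h4j - h4k')
        (fun hh => hjk (Bpt_inj hn0 hR0 hh)) (fun hh => hjk' (Bpt_inj hn0 hR0 hh))
      exact hkk' (Bpt_inj hn0 hR0 hQS)
    have hne' : x.1 - x.2 j ≠ -(x.2 j - Bpt n R j) := by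
      intro heq
      have hxB : x.1 = Bpt n R j := by
        have hh : x.1 - Bpt n R j = (x.1 - x.2 j) + (x.2 j - Bpt n R j) := by abel
        rw [heq] at hh
        simp only [neg_add_cancel] at hh
        exact sub_eq_zero.mp hh
      apply hRne
      apply folded hn hR0 hk'
      · have h4k := hCB4 k hCBk
        rw [hxB] at h4k
        exact h4k
      · have h4k' := hCB4 k' hCBk'
        rw [hxB] at h4k'
        exact h4k'
    have hsm : (2 * g (Sum.inl (Sum.inl j))) • (x.1 - x.2 j)
        = (2 * g (Sum.inl (Sum.inr j))) • (x.2 j - Bpt n R j) := by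
      apply Prod.ext <;> simp only [Prod.smul_fst, Prod.smul_snd, smul_eq_mul]
      · linarith [c1]
      · linarith [c2]
    have hu := indep_of_units (hua j) (hub j) hne hne' hsm
    exact ⟨by linarith [hu.1], by linarith [hu.2]⟩
  -- Step B : α_k = α_{k'} = 0
  have hfst2 : g (Sum.inl (Sum.inl k)) • ((2:ℝ) • (x.1 - x.2 k))
      + g (Sum.inl (Sum.inl k')) • ((2:ℝ) • (x.1 - x.2 k')) = 0 := by
    have hsub : ∑ j ∈ ({k, k'} : Finset (Fin n)), g (Sum.inl (Sum.inl j)) • ((2:ℝ) • (x.1 - x.2 j))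
        = ∑ j : Fin n, g (Sum.inl (Sum.inl j)) • ((2:ℝ) • (x.1 - x.2 j)) := by
      apply Finset.sum_subset (Finset.subset_univ _)
      intro j _ hj
      simp only [Finset.mem_insert, Finset.mem_singleton] at hj
      push_neg at hj
      rw [(hA j hj.1 hj.2).1, zero_smul]
    have hp := hsub.trans hfst
    rw [Finset.sum_pair hkk'] at hp
    exact hp
  have hnea : x.1 - x.2 k ≠ x.1 - x.2 k' := by
    intro heq
    have : Bpt n R k = Bpt n R k' := by
      have hB : x.1 - Bpt n R k = x.1 - Bpt n R k' := by rw [hCBk, hCBk', heq]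
      have f1 := congrArg Prod.fst hB
      have f2 := congrArg Prod.snd hB
      simp only [Prod.fst_sub, Prod.snd_sub] at f1 f2
      exact Prod.ext (by linarith) (by linarith)
    exact hkk' (Bpt_inj hn0 hR0 this)
  have hnea' : x.1 - x.2 k ≠ -(x.1 - x.2 k') := by
    intro heq
    have f1 : (x.1 - x.2 k).1 = -(x.1 - x.2 k').1 := by
      have := congrArg Prod.fst heq; simpa using this
    have f2 : (x.1 - x.2 k).2 = -(x.1 - x.2 k').2 := by
      have := congrArg Prod.snd heq; simpa using this
    have e1 : (Bpt n R k').1 - (Bpt n R k).1 = 4 * (x.1 - x.2 k).1 := by linarith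
    have e2 : (Bpt n R k').2 - (Bpt n R k).2 = 4 * (x.1 - x.2 k).2 := by linarith
    have e3 : ((Bpt n R k').1 - (Bpt n R k).1)^2 + ((Bpt n R k').2 - (Bpt n R k).2)^2 = 16 := by
      rw [e1, e2]
      linear_combination 16 * (hua k)
    nlinarith [hBnorm k, hBnorm k', sq_nonneg ((Bpt n R k).1 + (Bpt n R k').1),
      sq_nonneg ((Bpt n R k).2 + (Bpt n R k').2),
      mul_pos (sub_pos.2 hR2) (by linarith : (0:ℝ) < 2 + R)]
  have hsmB : (2 * g (Sum.inl (Sum.inl k))) • (x.1 - x.2 k)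
      = (-(2 * g (Sum.inl (Sum.inl k')))) • (x.1 - x.2 k') := by
    have c1 := congrArg Prod.fst hfst2
    have c2 := congrArg Prod.snd hfst2
    simp only [Prod.fst_add, Prod.snd_add, Prod.smul_fst, Prod.smul_snd, smul_eq_mul,
      Prod.fst_zero, Prod.snd_zero] at c1 c2
    apply Prod.ext <;> simp only [Prod.smul_fst, Prod.smul_snd, smul_eq_mul]
    · linarith
    · linarith
  have hαk : g (Sum.inl (Sum.inl k)) = 0 := by
    have hu := indep_of_units (hua k) (hua k') hnea hnea' hsmB
    linarith [hu.1]
  have hαk' : g (Sum.inl (Sum.inl k')) = 0 := by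
    have hu := indep_of_units (hua k) (hua k') hnea hnea' hsmB
    linarith [hu.2]
  -- horizontal obstruction
  have hak2 : (x.1 - x.2 k).2 ≠ 0 := by
    intro h0
    apply not_horizontal hn hR0 hR2 hk'
    exact horiz_identity (x.1 - x.2 k).1 (x.1 - x.2 k).2 (x.1 - x.2 k').1 (x.1 - x.2 k').2
      _ _ (hua k) (hua k') h0 (by linarith) (by linarith)
  have hak'2 : (x.1 - x.2 k').2 ≠ 0 := by
    intro h0
    apply not_horizontal hn hR0 hR2 hk'
    have hid := horiz_identity (x.1 - x.2 k').1 (x.1 - x.2 k').2 (x.1 - x.2 k).1 (x.1 - x.2 k).2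
      (-((Bpt n R k').1 - (Bpt n R k).1)) (-((Bpt n R k').2 - (Bpt n R k).2))
      (hua k') (hua k) h0 (by linarith) (by linarith)
    linear_combination hid
  -- Step C : j = k
  have hGk := hG k
  rw [if_pos rfl, if_neg hkk'] at hGk
  have hbk1 : (x.2 k - Bpt n R k).1 = (x.1 - x.2 k).1 := by
    have := congrArg Prod.fst h1; simpa using this.symm
  have hbk2 : (x.2 k - Bpt n R k).2 = (x.1 - x.2 k).2 := by
    have := congrArg Prod.snd h1; simpa using this.symm
  have ck1 : -(g (Sum.inl (Sum.inl k)) * (2 * (x.1 - x.2 k).1))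
      + g (Sum.inl (Sum.inr k)) * (2 * (x.2 k - Bpt n R k).1) + g (Sum.inr 0) = 0 := by
    have := congrArg Prod.fst hGk; simpa using this
  have ck2 : -(g (Sum.inl (Sum.inl k)) * (2 * (x.1 - x.2 k).2))
      + g (Sum.inl (Sum.inr k)) * (2 * (x.2 k - Bpt n R k).2) = 0 := by
    have := congrArg Prod.snd hGk; simpa using this
  have hβk : g (Sum.inl (Sum.inr k)) = 0 := by
    rw [hαk, hbk2] at ck2
    have hm : g (Sum.inl (Sum.inr k)) * (x.1 - x.2 k).2 = 0 := by linarith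
    exact (mul_eq_zero.1 hm).resolve_right hak2
  have hγ : g (Sum.inr 0) = 0 := by
    rw [hαk, hβk] at ck1
    linarith
  -- Step C' : j = k'
  have hGk' := hG k'
  rw [if_neg (Ne.symm hkk'), if_pos rfl] at hGk'
  have hbk'2 : (x.2 k' - Bpt n R k').2 = (x.1 - x.2 k').2 := by
    have := congrArg Prod.snd h2; simpa using this.symm
  have ck'1 : -(g (Sum.inl (Sum.inl k')) * (2 * (x.1 - x.2 k').1))
      + g (Sum.inl (Sum.inr k')) * (2 * (x.2 k' - Bpt n R k').1) + g (Sum.inr 1) = 0 := by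
    have := congrArg Prod.fst hGk'; simpa using this
  have ck'2 : -(g (Sum.inl (Sum.inl k')) * (2 * (x.1 - x.2 k').2))
      + g (Sum.inl (Sum.inr k')) * (2 * (x.2 k' - Bpt n R k').2) = 0 := by
    have := congrArg Prod.snd hGk'; simpa using this
  have hβk' : g (Sum.inl (Sum.inr k')) = 0 := by
    rw [hαk', hbk'2] at ck'2
    have hm : g (Sum.inl (Sum.inr k')) * (x.1 - x.2 k').2 = 0 := by linarith
    exact (mul_eq_zero.1 hm).resolve_right hak'2
  have hγ' : g (Sum.inr 1) = 0 := by
    rw [hαk', hβk'] at ck'1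
    linarith
  -- conclusion
  rintro ((j | j) | t)
  · by_cases hjk : j = k
    · rw [hjk]; exact hαk
    · by_cases hjk' : j = k'
      · rw [hjk']; exact hαk'
      · exact (hA j hjk hjk').1
  · by_cases hjk : j = k
    · rw [hjk]; exact hβk
    · by_cases hjk' : j = k'
      · rw [hjk']; exact hβk'
      · exact (hA j hjk hjk').2
  · fin_cases t
    · exact hγ
    · exact hγ'
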